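/- Let ψ : ℕ → [0,∞), let 1 ≤ r < q be integers, and y, z ∈ ℝ. Define A_q^y = ⋃_{gcd(a,q)=1} [(a+y)/q − ψ(q)/q, (a+y)/q + ψ(q)/q] ∩ [0,1) and similarly A_r^z. Then there is an absolute constant C with λ(A_q^y ∩ A_r^z) ≤ C · ( ψ(q) ψ(r) + (ψ(q)/q) · φ(gcd(q,r)) ). -/

import Mathlib

open MeasureTheory Finset

-- coprime part lemma
lemma copr_aux (n m : ℕ) (hn : 0 < n) (hm : 0 < m) :
    Nat.Coprime (n / n.gcd (m ^ n)) m := by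
  set g := n.gcd (m ^ n) with hgdef
  have hg : 0 < g := Nat.gcd_pos_of_pos_left _ hn
  have hgn : g ∣ n := Nat.gcd_dvd_left _ _
  have hgm : g ∣ m ^ n := Nat.gcd_dvd_right _ _
  by_contra hcon
  obtain ⟨p, pp, hp1, hp2⟩ := Nat.Prime.not_coprime_iff_dvd.mp hcon
  have h1 : p * g ∣ n := by
    have := mul_dvd_mul hp1 (dvd_refl g)
    rwa [Nat.div_mul_cancel hgn] at this
  set k := g.factorization p with hk
  have hpk : p ^ k ∣ g := Nat.ordProj_dvd g p
  have hkn : k + 1 ≤ n := by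
    have h2 : p ^ k ≤ n := Nat.le_of_dvd hn (hpk.trans hgn)
    have h3 : k < p ^ k := Nat.lt_pow_self pp.one_lt
    omega
  have h2 : p * g ∣ m ^ n := by
    have hu : p ^ k * (g / p ^ k) = g := Nat.ordProj_mul_ordCompl_eq_self g p
    have hnd : ¬ p ∣ g / p ^ k := Nat.not_dvd_ordCompl pp hg.ne'
    have hcop : Nat.Coprime (p ^ (k + 1)) (g / p ^ k) :=
      (Nat.Prime.coprime_iff_not_dvd pp).mpr hnd |>.pow_left _
    have hd1 : p ^ (k + 1) ∣ m ^ n :=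
      dvd_trans (pow_dvd_pow_of_dvd hp2 _) (pow_dvd_pow m hkn)
    have hd2 : g / p ^ k ∣ m ^ n := (Nat.div_dvd_of_dvd hpk).trans hgm
    have := Nat.Coprime.mul_dvd_of_dvd_of_dvd hcop hd1 hd2
    have heq : p ^ (k + 1) * (g / p ^ k) = p * g := by
      rw [pow_succ, mul_comm (p ^ k) p, mul_assoc, hu]
    rwa [heq] at this
  have := Nat.le_of_dvd hg (Nat.dvd_gcd h1 h2)
  have hp2le := pp.two_le
  nlinarith

lemma countA (q r : ℕ) (hq : 0 < q) (hr : 0 < r) (c : ℤ) :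
    ((Finset.Icc 1 q ×ˢ Finset.Icc 1 r).filter
      (fun p : ℕ × ℕ => Nat.gcd p.1 q = 1 ∧ Nat.gcd p.2 r = 1 ∧
        (p.1 : ℤ) * r - (p.2 : ℤ) * q = c)).card ≤ (q.gcd r).totient := by
  classical
  set d := q.gcd r with hddef
  have hd : 0 < d := Nat.gcd_pos_of_pos_left _ hq
  set q' := q / d with hq'def
  set r' := r / d with hr'def
  have hdq : d ∣ q := Nat.gcd_dvd_left _ _
  have hdr : d ∣ r := Nat.gcd_dvd_right _ _
  have hqq : d * q' = q := Nat.mul_div_cancel' hdq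
  have hrr : d * r' = r := Nat.mul_div_cancel' hdr
  have hq' : 0 < q' := Nat.div_pos (Nat.le_of_dvd hq hdq) hd
  have hr' : 0 < r' := Nat.div_pos (Nat.le_of_dvd hr hdr) hd
  have hcop : Nat.Coprime q' r' := Nat.coprime_div_gcd_div_gcd hd
  set d₂ := d.gcd (q' ^ d) with hd₂def
  set d₁ := d / d₂ with hd₁def
  have hd₂ : 0 < d₂ := Nat.gcd_pos_of_pos_left _ hd
  have hd₂d : d₂ ∣ d := Nat.gcd_dvd_left _ _
  have hd₁ : 0 < d₁ := Nat.div_pos (Nat.le_of_dvd hd hd₂d) hd₂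
  have hdd : d₁ * d₂ = d := Nat.div_mul_cancel hd₂d
  have hcop1 : Nat.Coprime d₁ q' := copr_aux d q' hd hq'
  have hd₂q' : ∀ p : ℕ, p.Prime → p ∣ d₂ → p ∣ q' := fun p pp hp =>
    pp.dvd_of_dvd_pow (hp.trans (Nat.gcd_dvd_right _ _))
  have hcop2 : Nat.Coprime d₂ r' := by
    by_contra hcon
    obtain ⟨p, pp, hp1, hp2⟩ := Nat.Prime.not_coprime_iff_dvd.mp hcon
    exact pp.one_lt.ne' (Nat.eq_one_of_dvd_coprimes hcop (hd₂q' p pp hp1) hp2)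
  have hcop12 : Nat.Coprime d₁ d₂ := by
    by_contra hcon
    obtain ⟨p, pp, hp1, hp2⟩ := Nat.Prime.not_coprime_iff_dvd.mp hcon
    exact pp.one_lt.ne' (Nat.eq_one_of_dvd_coprimes hcop1 hp1 (hd₂q' p pp hp2))
  haveI : NeZero d₁ := ⟨hd₁.ne'⟩
  haveI : NeZero d₂ := ⟨hd₂.ne'⟩
  set f : ℕ × ℕ → ZMod d₁ × ZMod d₂ := fun p => ((p.1 : ZMod d₁), (p.2 : ZMod d₂)) with hfdef
  set t : Finset (ZMod d₁ × ZMod d₂) :=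
    (Finset.univ.image (Units.val : (ZMod d₁)ˣ → ZMod d₁)) ×ˢ
      (Finset.univ.image (Units.val : (ZMod d₂)ˣ → ZMod d₂)) with htdef
  have hmaps : ∀ p ∈ (Finset.Icc 1 q ×ˢ Finset.Icc 1 r).filter
      (fun p : ℕ × ℕ => Nat.gcd p.1 q = 1 ∧ Nat.gcd p.2 r = 1 ∧
        (p.1 : ℤ) * r - (p.2 : ℤ) * q = c), f p ∈ t := by
    rintro ⟨a, b⟩ hp
    simp only [Finset.mem_filter] at hp
    obtain ⟨-, hga, hgb, -⟩ := hp
    have h1 : Nat.Coprime a d₁ := Nat.Coprime.coprime_dvd_right ((hd₁def ▸ Nat.div_dvd_of_dvd hd₂d).trans hdq) hga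
    have h2 : Nat.Coprime b d₂ := Nat.Coprime.coprime_dvd_right (hd₂d.trans hdr) hgb
    have hu1 : IsUnit ((a : ZMod d₁)) := (ZMod.isUnit_iff_coprime a d₁).mpr h1
    have hu2 : IsUnit ((b : ZMod d₂)) := (ZMod.isUnit_iff_coprime b d₂).mpr h2
    simp only [htdef, Finset.mem_product, Finset.mem_image, Finset.mem_univ, true_and]
    exact ⟨⟨hu1.unit, hu1.unit_spec⟩, ⟨hu2.unit, hu2.unit_spec⟩⟩
  have hinj : Set.InjOn f ((Finset.Icc 1 q ×ˢ Finset.Icc 1 r).filter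
      (fun p : ℕ × ℕ => Nat.gcd p.1 q = 1 ∧ Nat.gcd p.2 r = 1 ∧
        (p.1 : ℤ) * r - (p.2 : ℤ) * q = c) : Finset (ℕ × ℕ)) := by
    rintro ⟨a1, b1⟩ hp1 ⟨a2, b2⟩ hp2 hfe
    simp only [Finset.coe_filter, Set.mem_setOf_eq, Finset.mem_product, Finset.mem_Icc] at hp1 hp2
    obtain ⟨⟨⟨ha1l, ha1u⟩, hb1l, hb1u⟩, -, -, hc1⟩ := hp1
    obtain ⟨⟨⟨ha2l, ha2u⟩, hb2l, hb2u⟩, -, -, hc2⟩ := hp2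
    have hfe1 : (a1 : ZMod d₁) = (a2 : ZMod d₁) := congrArg Prod.fst hfe
    have hfe2 : (b1 : ZMod d₂) = (b2 : ZMod d₂) := congrArg Prod.snd hfe
    have hD1 : (d₁ : ℤ) ∣ (a1 : ℤ) - a2 := by
      have := ((ZMod.natCast_eq_natCast_iff a2 a1 d₁).mp hfe1.symm).dvd
      exact this
    have hD2 : (d₂ : ℤ) ∣ (b1 : ℤ) - b2 := by
      exact ((ZMod.natCast_eq_natCast_iff b2 b1 d₂).mp hfe2.symm).dvd
    -- structure of solutions
    have hE : ((a1 : ℤ) - a2) * r' = ((b1 : ℤ) - b2) * q' := by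
      have h0 : ((a1 : ℤ) - a2) * r = ((b1 : ℤ) - b2) * q := by linarith [hc1, hc2]
      have hrC : (r : ℤ) = (d : ℤ) * r' := by exact_mod_cast hrr.symm
      have hqC : (q : ℤ) = (d : ℤ) * q' := by exact_mod_cast hqq.symm
      rw [hrC, hqC] at h0
      have hdne : (d : ℤ) ≠ 0 := Int.natCast_ne_zero.mpr hd.ne'
      exact mul_left_cancel₀ hdne (by ring_nf; ring_nf at h0; linarith)
    have hcopZ : IsCoprime (q' : ℤ) (r' : ℤ) := Nat.isCoprime_iff_coprime.mpr hcop
    have hq'dvd : (q' : ℤ) ∣ (a1 : ℤ) - a2 := by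
      refine hcopZ.dvd_of_dvd_mul_right ?_
      exact ⟨(b1 : ℤ) - b2, by linarith [hE]⟩
    obtain ⟨s, hs⟩ := hq'dvd
    have hbs : (b1 : ℤ) - b2 = r' * s := by
      have hq'ne : (q' : ℤ) ≠ 0 := Int.natCast_ne_zero.mpr hq'.ne'
      apply mul_right_cancel₀ hq'ne
      rw [← hE, hs]; ring
    have hd1s : (d₁ : ℤ) ∣ s := by
      have : (d₁ : ℤ) ∣ (q' : ℤ) * s := hs ▸ hD1
      exact (Nat.isCoprime_iff_coprime.mpr hcop1).dvd_of_dvd_mul_left this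
    have hd2s : (d₂ : ℤ) ∣ s := by
      have : (d₂ : ℤ) ∣ (r' : ℤ) * s := hbs ▸ hD2
      exact (Nat.isCoprime_iff_coprime.mpr hcop2).dvd_of_dvd_mul_left this
    have hds : (d : ℤ) ∣ s := by
      have h12 : IsCoprime (d₁ : ℤ) (d₂ : ℤ) := Nat.isCoprime_iff_coprime.mpr hcop12
      have := h12.mul_dvd hd1s hd2s
      rwa [show ((d₁ : ℤ) * d₂) = (d : ℤ) by exact_mod_cast congrArg (Nat.cast : ℕ → ℤ) hdd] at this
    have hqdvd : (q : ℤ) ∣ (a1 : ℤ) - a2 := by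
      obtain ⟨u, hu⟩ := hds
      exact ⟨u, by rw [hs, hu, show (q : ℤ) = (d : ℤ) * q' by exact_mod_cast hqq.symm]; ring⟩
    have ha : a1 = a2 := by
      have habs : |(a1 : ℤ) - a2| < q := by
        rw [abs_sub_lt_iff]
        omega
      have := Int.eq_zero_of_abs_lt_dvd hqdvd habs
      omega
    have hb : b1 = b2 := by
      have h0 : ((b1 : ℤ) - b2) * q = 0 := by
        have : ((a1 : ℤ) - a2) * r = ((b1 : ℤ) - b2) * q := by linarith [hc1, hc2]
        rw [ha] at this; simpa using this.symm
      have hqne : (q : ℤ) ≠ 0 := Int.natCast_ne_zero.mpr hq.ne'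
      have := mul_eq_zero.mp h0
      omega
    simp [ha, hb]
  have hle := Finset.card_le_card_of_injOn f hmaps hinj
  refine hle.trans ?_
  have hcard : t.card = d₁.totient * d₂.totient := by
    rw [htdef, Finset.card_product,
      Finset.card_image_of_injective _ (fun u v h => Units.ext h),
      Finset.card_image_of_injective _ (fun u v h => Units.ext h),
      Finset.card_univ, Finset.card_univ, ZMod.card_units_eq_totient,
      ZMod.card_units_eq_totient]
  rw [hcard, ← Nat.totient_mul hcop12, hdd]

set_option maxHeartbeats 1000000 in
theorem stmt16 :
    ∃ C : ℝ, 0 < C ∧ ∀ (ψ : ℕ → ℝ), (∀ q, 0 ≤ ψ q) → ∀ (q r : ℕ), 1 ≤ r → r < q →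
      ∀ (y z : ℝ),
        volume ((⋃ a ∈ Finset.Icc 1 q, ⋃ (_ : Nat.gcd a q = 1),
            (Set.Icc (((a : ℝ) + y) / q - ψ q / q) (((a : ℝ) + y) / q + ψ q / q)
              ∩ Set.Ico (0 : ℝ) 1)) ∩
          (⋃ b ∈ Finset.Icc 1 r, ⋃ (_ : Nat.gcd b r = 1),
            (Set.Icc (((b : ℝ) + z) / r - ψ r / r) (((b : ℝ) + z) / r + ψ r / r)
              ∩ Set.Ico (0 : ℝ) 1))) ≤
        ENNReal.ofReal (C * (ψ q * ψ r + ψ q / q * Nat.totient (Nat.gcd q r))) := by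
  classical
  refine ⟨8, by norm_num, ?_⟩
  intro ψ hψ q r hr1 hrq y z
  have hq0 : 0 < q := by omega
  have hr0 : 0 < r := hr1
  have hqR : (0 : ℝ) < q := by exact_mod_cast hq0
  have hrR : (0 : ℝ) < r := by exact_mod_cast hr0
  have hψq : 0 ≤ ψ q := hψ q
  have hψr : 0 ≤ ψ r := hψ r
  set εq : ℝ := ψ q / q with hεq
  set εr : ℝ := ψ r / r with hεr
  have hεq0 : 0 ≤ εq := div_nonneg hψq hqR.le
  have hεr0 : 0 ≤ εr := div_nonneg hψr hrR.le
  set m : ℝ := min εq εr with hm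
  have hm0 : 0 ≤ m := le_min hεq0 hεr0
  set X : ℕ → Set ℝ := fun a =>
    Set.Icc (((a : ℝ) + y) / q - εq) (((a : ℝ) + y) / q + εq) ∩ Set.Ico (0 : ℝ) 1 with hX
  set Y : ℕ → Set ℝ := fun b =>
    Set.Icc (((b : ℝ) + z) / r - εr) (((b : ℝ) + z) / r + εr) ∩ Set.Ico (0 : ℝ) 1 with hY
  set P : Finset (ℕ × ℕ) := (Finset.Icc 1 q ×ˢ Finset.Icc 1 r).filter
    (fun p : ℕ × ℕ => Nat.gcd p.1 q = 1 ∧ Nat.gcd p.2 r = 1 ∧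
      |((p.1 : ℝ) + y) / q - ((p.2 : ℝ) + z) / r| ≤ εq + εr) with hP
  -- Step 1: subset
  have hsub : ((⋃ a ∈ Finset.Icc 1 q, ⋃ (_ : Nat.gcd a q = 1), X a) ∩
      (⋃ b ∈ Finset.Icc 1 r, ⋃ (_ : Nat.gcd b r = 1), Y b)) ⊆
      ⋃ p ∈ P, X p.1 ∩ Y p.2 := by
    rintro x ⟨hx1, hx2⟩
    simp only [Set.mem_iUnion] at hx1 hx2
    obtain ⟨a, ha, hga, hxa⟩ := hx1
    obtain ⟨b, hb, hgb, hxb⟩ := hx2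
    have hclose : |((a : ℝ) + y) / q - ((b : ℝ) + z) / r| ≤ εq + εr := by
      obtain ⟨⟨h1, h2⟩, -⟩ := hxa
      obtain ⟨⟨h3, h4⟩, -⟩ := hxb
      rw [abs_sub_le_iff]
      constructor <;> linarith
    have hmem : (a, b) ∈ P := by
      rw [hP, Finset.mem_filter, Finset.mem_product]
      exact ⟨⟨ha, hb⟩, hga, hgb, hclose⟩
    exact Set.mem_biUnion hmem ⟨hxa, hxb⟩
  -- Step 2: volume bound by counting
  have hvol1 : ∀ p : ℕ × ℕ, volume (X p.1 ∩ Y p.2) ≤ ENNReal.ofReal (2 * m) := by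
    intro p
    rcases min_le_iff.mp (le_refl m) with _ | _
    all_goals {
      rcases le_total εq εr with hle | hle
      · have hmeq : m = εq := min_eq_left hle
        calc volume (X p.1 ∩ Y p.2) ≤ volume (Set.Icc (((p.1 : ℝ) + y) / q - εq) (((p.1 : ℝ) + y) / q + εq)) := by
              apply measure_mono; intro x hx; exact hx.1.1
          _ = ENNReal.ofReal (2 * m) := by rw [Real.volume_Icc, hmeq]; ring_nf
      · have hmeq : m = εr := min_eq_right hle
        calc volume (X p.1 ∩ Y p.2) ≤ volume (Set.Icc (((p.2 : ℝ) + z) / r - εr) (((p.2 : ℝ) + z) / r + εr)) := by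
              apply measure_mono; intro x hx; exact hx.2.1
          _ = ENNReal.ofReal (2 * m) := by rw [Real.volume_Icc, hmeq]; ring_nf
    }
  have hvol : volume ((⋃ a ∈ Finset.Icc 1 q, ⋃ (_ : Nat.gcd a q = 1), X a) ∩
      (⋃ b ∈ Finset.Icc 1 r, ⋃ (_ : Nat.gcd b r = 1), Y b)) ≤
      (P.card : ENNReal) * ENNReal.ofReal (2 * m) := by
    refine (measure_mono hsub).trans ?_
    refine (measure_biUnion_finset_le P _).trans ?_
    calc ∑ p ∈ P, volume (X p.1 ∩ Y p.2) ≤ ∑ _p ∈ P, ENNReal.ofReal (2 * m) :=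
          Finset.sum_le_sum (fun p _ => hvol1 p)
      _ = (P.card : ENNReal) * ENNReal.ofReal (2 * m) := by
          rw [Finset.sum_const, nsmul_eq_mul]
  -- Step 3: counting P
  set d := q.gcd r with hd
  have hdpos : 0 < d := Nat.gcd_pos_of_pos_left _ hq0
  have hdR : (0 : ℝ) < d := by exact_mod_cast hdpos
  set K : ℝ := (εq + εr) * q * r with hK
  have hK0 : 0 ≤ K := by positivity
  set t : ℝ := y * r - z * q with ht
  set lo : ℤ := ⌈(-t - K) / d⌉ with hlo
  set hi : ℤ := ⌊(K - t) / d⌋ with hhi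
  set f : ℕ × ℕ → ℤ := fun p => ((p.1 : ℤ) * r - (p.2 : ℤ) * q) / d with hf
  have hdvd : ∀ p : ℕ × ℕ, (d : ℤ) ∣ ((p.1 : ℤ) * r - (p.2 : ℤ) * q) := by
    intro p
    have h1 : (d : ℤ) ∣ (r : ℤ) := Int.natCast_dvd_natCast.mpr (Nat.gcd_dvd_right q r)
    have h2 : (d : ℤ) ∣ (q : ℤ) := Int.natCast_dvd_natCast.mpr (Nat.gcd_dvd_left q r)
    exact dvd_sub (Dvd.dvd.mul_left h1 _) (Dvd.dvd.mul_left h2 _)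
  have hfc : ∀ p : ℕ × ℕ, (d : ℤ) * f p = (p.1 : ℤ) * r - (p.2 : ℤ) * q := fun p =>
    Int.mul_ediv_cancel' (hdvd p)
  have hclose_int : ∀ p ∈ P, |((p.1 : ℝ) * r - (p.2 : ℝ) * q) + t| ≤ K := by
    rintro ⟨a, b⟩ hp
    rw [hP, Finset.mem_filter] at hp
    obtain ⟨-, -, -, hcl⟩ := hp
    have hqr : (0 : ℝ) < q * r := by positivity
    have key : (((a : ℝ) + y) / q - ((b : ℝ) + z) / r) * (q * r) = ((a : ℝ) * r - (b : ℝ) * q) + t := by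
      field_simp
      ring
    calc |((a : ℝ) * r - (b : ℝ) * q) + t| = |(((a : ℝ) + y) / q - ((b : ℝ) + z) / r)| * (q * r) := by
          rw [← key, abs_mul, abs_of_pos hqr]
      _ ≤ (εq + εr) * (q * r) := by
          apply mul_le_mul_of_nonneg_right hcl hqr.le
      _ = K := by rw [hK]; ring
  have hmaps : ∀ p ∈ P, f p ∈ Finset.Icc lo hi := by
    intro p hp
    have h1 := hclose_int p hp
    have hcast : ((p.1 : ℝ) * r - (p.2 : ℝ) * q) = ((d : ℝ)) * (f p : ℝ) := by
      have := hfc p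
      have : (((d : ℤ) * f p : ℤ) : ℝ) = (((p.1 : ℤ) * r - (p.2 : ℤ) * q : ℤ) : ℝ) := by
        exact_mod_cast congrArg (Int.cast : ℤ → ℝ) this
      push_cast at this
      linarith
    rw [hcast] at h1
    rw [abs_le] at h1
    rw [Finset.mem_Icc]
    constructor
    · rw [hlo]
      apply Int.ceil_le.mpr
      rw [div_le_iff₀ hdR]
      linarith [h1.1]
    · rw [hhi]
      apply Int.le_floor.mpr
      rw [le_div_iff₀ hdR]
      linarith [h1.2]
  have hfib : ∀ c ∈ P.image f, (P.filter (fun p => f p = c)).card ≤ d.totient := by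
    intro c _
    refine le_trans (Finset.card_le_card ?_) (countA q r hq0 hr0 ((d : ℤ) * c))
    intro p hp
    rw [Finset.mem_filter] at hp
    obtain ⟨hpP, hpc⟩ := hp
    rw [hP, Finset.mem_filter] at hpP
    obtain ⟨hprod, hg1, hg2, -⟩ := hpP
    rw [Finset.mem_filter]
    refine ⟨hprod, hg1, hg2, ?_⟩
    rw [← hfc p, hpc]
  have hcount : P.card ≤ d.totient * (Finset.Icc lo hi).card := by
    refine le_trans (Finset.card_le_mul_card_image P d.totient hfib) ?_
    have : P.image f ⊆ Finset.Icc lo hi := Finset.image_subset_iff.mpr hmaps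
    exact Nat.mul_le_mul_left _ (Finset.card_le_card this)
  -- Step 4: real arithmetic
  have hNcard : ((Finset.Icc lo hi).card : ℝ) ≤ 2 * K / d + 1 := by
    rcases le_or_gt lo hi with hle | hlt
    · rw [Int.card_Icc]
      have h1 : ((hi + 1 - lo).toNat : ℝ) = ((hi : ℝ) + 1 - lo) := by
        have h0 : ((hi + 1 - lo).toNat : ℤ) = hi + 1 - lo := Int.toNat_of_nonneg (by omega)
        have := congrArg (Int.cast : ℤ → ℝ) h0
        push_cast at this
        linarith
      rw [h1]
      have h2 : (hi : ℝ) ≤ (K - t) / d := Int.floor_le _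
      have h3 : (-t - K) / d ≤ (lo : ℝ) := Int.le_ceil _
      have h4 : (K - t) / d - (-t - K) / d = 2 * K / d := by field_simp; ring
      linarith
    · rw [Int.card_Icc]
      have : (hi + 1 - lo).toNat = 0 := by omega
      rw [this]
      have : 0 ≤ 2 * K / d := by positivity
      simp; linarith
  have hreal : (P.card : ℝ) * (2 * m) ≤ 8 * (ψ q * ψ r + εq * d.totient) := by
    have h1 : (P.card : ℝ) ≤ (d.totient : ℝ) * ((Finset.Icc lo hi).card : ℝ) := by
      exact_mod_cast hcount
    have h2 : (P.card : ℝ) * (2 * m) ≤ (d.totient : ℝ) * ((Finset.Icc lo hi).card : ℝ) * (2 * m) := by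
      apply mul_le_mul_of_nonneg_right h1 (by positivity)
    refine h2.trans ?_
    have h3 : (d.totient : ℝ) * ((Finset.Icc lo hi).card : ℝ) * (2 * m) ≤
        (d.totient : ℝ) * (2 * K / d + 1) * (2 * m) := by
      apply mul_le_mul_of_nonneg_right _ (by positivity)
      exact mul_le_mul_of_nonneg_left hNcard (by positivity)
    refine h3.trans ?_
    have htot_le : (d.totient : ℝ) ≤ d := by exact_mod_cast Nat.totient_le d
    have htot0 : (0 : ℝ) ≤ d.totient := by positivity
    have hma : m ≤ εq := min_le_left _ _
    have hmb : m ≤ εr := min_le_right _ _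
    have hKm : K * m ≤ 2 * (ψ q * ψ r) := by
      have e1 : εq * q = ψ q := div_mul_cancel₀ _ hqR.ne'
      have e2 : εr * r = ψ r := div_mul_cancel₀ _ hrR.ne'
      have t1 : εq * q * r * m ≤ εq * q * r * εr := by
        apply mul_le_mul_of_nonneg_left hmb (by positivity)
      have t2 : εr * q * r * m ≤ εr * q * r * εq := by
        apply mul_le_mul_of_nonneg_left hma (by positivity)
      have : K * m = εq * q * r * m + εr * q * r * m := by rw [hK]; ring
      rw [this]
      have u1 : εq * q * r * εr = ψ q * ψ r := by rw [← e1, ← e2]; ring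
      have u2 : εr * q * r * εq = ψ q * ψ r := by rw [← e1, ← e2]; ring
      linarith
    -- expand
    have expand : (d.totient : ℝ) * (2 * K / d + 1) * (2 * m) =
        4 * (K * m) * ((d.totient : ℝ) / d) + 2 * m * d.totient := by
      field_simp
      ring
    rw [expand]
    have hfrac : (d.totient : ℝ) / d ≤ 1 := by
      rw [div_le_one hdR]; exact htot_le
    have hKm0 : (0 : ℝ) ≤ 4 * (K * m) := by
      have := mul_nonneg hK0 hm0; linarith
    have b1 : 4 * (K * m) * ((d.totient : ℝ) / d) ≤ 4 * (K * m) := by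
      have := mul_le_mul_of_nonneg_left hfrac hKm0
      linarith
    have b2 : 4 * (K * m) ≤ 8 * (ψ q * ψ r) := by linarith
    have b3 : 2 * m * (d.totient : ℝ) ≤ 2 * εq * (d.totient : ℝ) :=
      mul_le_mul_of_nonneg_right (by linarith) htot0
    have b4 : (0 : ℝ) ≤ εq * d.totient := mul_nonneg hεq0 htot0
    linarith
  -- conclude
  refine hvol.trans ?_
  calc (P.card : ENNReal) * ENNReal.ofReal (2 * m)
      = ENNReal.ofReal ((P.card : ℝ) * (2 * m)) := by
        rw [ENNReal.ofReal_mul (Nat.cast_nonneg P.card), ENNReal.ofReal_natCast]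
    _ ≤ ENNReal.ofReal (8 * (ψ q * ψ r + ψ q / q * Nat.totient (Nat.gcd q r))) := by
        apply ENNReal.ofReal_le_ofReal
        exact hreal
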